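/- Let E, F be closed subsets of an uncountable ω₁-compact subspace S of a tree T of height ω₁. If E ∩ F is countable, then E↓ ∩ F↓ is countable. -/

import Mathlib

open Set Topology Cardinal Ordinal

universe u v

/-- The order (interval) topology of a tree. -/
def treeTopology (T : Type u) [PartialOrder T] : TopologicalSpace T :=
  TopologicalSpace.generateFrom
    ({s | ∃ a b : T, a < b ∧ s = Set.Ioc a b} ∪
     {s | ∃ b : T, (∀ a : T, ¬a < b) ∧ s = {b}})

/-- A tree order: the predecessors of every element are well-ordered. -/
def IsTreeOrder (T : Type u) [PartialOrder T] : Prop :=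
  ∀ x : T, IsWellOrder {y : T // y < x} (· < ·)

/-- The height of an element: the order type of its set of predecessors. -/
noncomputable def treeHeight {T : Type u} [PartialOrder T] (hT : IsTreeOrder T) (x : T) :
    Ordinal.{u} :=
  @Ordinal.type {y : T // y < x} (· < ·) (hT x)

/-- Hausdorff tree: elements at limit levels are determined by their predecessors. -/
def IsHausdorffTree (T : Type u) [PartialOrder T] : Prop :=
  ∀ x y : T, Set.Iio x = Set.Iio y → (Set.Iio x).Nonempty →
    (∀ z ∈ Set.Iio x, ∃ w ∈ Set.Iio x, z < w) → x = y

/-- The tree has height ω₁. -/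
def HasHeightOmega1 {T : Type u} [PartialOrder T] (hT : IsTreeOrder T) : Prop :=
  (∀ x : T, treeHeight hT x < ω₁) ∧ ∀ α < ω₁, ∃ x : T, treeHeight hT x = α

/-- Downward closure of a subset of a tree. -/
def downClosure {T : Type u} [PartialOrder T] (S : Set T) : Set T := {x | ∃ y ∈ S, x ≤ y}

/-- `D` is a closed discrete subset of the subspace `S`. -/
def ClosedDiscreteIn {T : Type u} [TopologicalSpace T] (D S : Set T) : Prop :=
  D ⊆ S ∧ closure D ∩ S ⊆ D ∧ ∀ x ∈ D, ∃ U : Set T, IsOpen U ∧ x ∈ U ∧ U ∩ D = {x}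

/-- `S` is ω₁-compact in the subspace topology: every closed discrete subset is countable. -/
def OmegaOneCompactIn {T : Type u} [TopologicalSpace T] (S : Set T) : Prop :=
  ∀ D : Set T, ClosedDiscreteIn D S → D.Countable

/-- A club (closed unbounded) subset of `ω₁` (as a set of ordinals, with the order topology). -/
def IsClubBelowOmega1 (C : Set Ordinal.{u}) : Prop :=
  C ⊆ Set.Iio ω₁ ∧ (∀ α < ω₁, ∃ β ∈ C, α ≤ β) ∧ ∀ α < ω₁, α ∈ closure C → α ∈ C

/-- A stationary subset of `ω₁`. -/
def IsStationaryBelowOmega1 (S : Set Ordinal.{u}) : Prop :=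
  S ⊆ Set.Iio ω₁ ∧ ∀ C : Set Ordinal.{u}, IsClubBelowOmega1 C → (S ∩ C).Nonempty

section AuxOrder

variable {T : Type u} [PartialOrder T]

theorem auxLinear (hT : IsTreeOrder T) {y y' t : T} (h1 : y ≤ t) (h2 : y' ≤ t) :
    y ≤ y' ∨ y' ≤ y := by
  rcases eq_or_lt_of_le h1 with rfl | h1'
  · exact Or.inr h2
  rcases eq_or_lt_of_le h2 with rfl | h2'
  · exact Or.inl h1
  have := (hT t).trichotomous ⟨y, h1'⟩ ⟨y', h2'⟩
  have htri : (⟨y, h1'⟩ : {z : T // z < t}) < ⟨y', h2'⟩ ∨ (⟨y, h1'⟩ : {z : T // z < t}) = ⟨y', h2'⟩ ∨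
      (⟨y', h2'⟩ : {z : T // z < t}) < ⟨y, h1'⟩ := by tauto
  rcases htri with h | h | h
  · exact Or.inl (le_of_lt (Subtype.mk_lt_mk.mp h))
  · exact Or.inl (le_of_eq (congrArg Subtype.val h))
  · exact Or.inr (le_of_lt (Subtype.mk_lt_mk.mp h))

private def auxEmb {a b : T} (h : ∀ y : T, y < a → y < b) :
    @RelEmbedding {y : T // y < a} {y : T // y < b} (· < ·) (· < ·) :=
  ⟨⟨fun y => ⟨y.1, h y.1 y.2⟩, fun y y' hyy => by
      have h2 := congrArg Subtype.val hyy
      exact Subtype.ext h2⟩, by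
    intro y y'
    exact Subtype.mk_lt_mk.trans Subtype.coe_lt_coe.symm⟩

theorem auxHtLe (hT : IsTreeOrder T) {a b : T} (h : a ≤ b) :
    treeHeight hT a ≤ treeHeight hT b :=
  @RelEmbedding.ordinal_type_le _ _ _ _ (hT a) (hT b)
    (auxEmb (fun y hy => lt_of_lt_of_le hy h))

theorem auxHtLt (hT : IsTreeOrder T) {a b : T} (h : a < b) :
    treeHeight hT a < treeHeight hT b := by
  have pseg : @PrincipalSeg {y : T // y < a} {y : T // y < b} (· < ·) (· < ·) := by
    refine ⟨auxEmb (fun y hy => lt_trans hy h), ⟨a, h⟩, ?_⟩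
    intro y'
    constructor
    · rintro ⟨y, rfl⟩
      exact Subtype.mk_lt_mk.mpr y.2
    · intro hy'
      have : y'.1 < a := Subtype.mk_lt_mk.mp (show y' < (⟨a, h⟩ : {y : T // y < b}) from hy')
      exact ⟨⟨y'.1, this⟩, Subtype.ext rfl⟩
  exact @PrincipalSeg.ordinal_type_lt _ _ _ _ (hT a) (hT b) pseg

end AuxOrder

section AuxTop

variable {T : Type u} [PartialOrder T] [tT : TopologicalSpace T]

theorem auxIocOpen (htop : tT = treeTopology T) {a b : T} (h : a < b) :
    IsOpen (Set.Ioc a b) := by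
  rw [htop]
  exact TopologicalSpace.isOpen_generateFrom_of_mem (Or.inl ⟨a, b, h, rfl⟩)

theorem auxSingOpen (htop : tT = treeTopology T) {b : T} (h : ∀ a : T, ¬a < b) :
    IsOpen ({b} : Set T) := by
  rw [htop]
  exact TopologicalSpace.isOpen_generateFrom_of_mem (Or.inr ⟨b, h, rfl⟩)

theorem auxNbhd (htop : tT = treeTopology T) (hT : IsTreeOrder T) {z : T} {U : Set T}
    (hne : (Set.Iio z).Nonempty) (hU : IsOpen U) (hz : z ∈ U) :
    ∃ c, c < z ∧ Set.Ioc c z ⊆ U := by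
  rw [htop] at hU
  have hGen : TopologicalSpace.GenerateOpen
      ({s | ∃ a b : T, a < b ∧ s = Set.Ioc a b} ∪
       {s | ∃ b : T, (∀ a : T, ¬a < b) ∧ s = {b}}) U := hU
  clear hU
  induction hGen with
  | basic s hs =>
    rcases hs with ⟨a, b, hab, rfl⟩ | ⟨b, hb, rfl⟩
    · refine ⟨a, hz.1, ?_⟩
      intro y hy
      exact ⟨hy.1, le_trans hy.2 hz.2⟩
    · obtain ⟨c, hc⟩ := hne
      exact absurd hc (by rw [hz] at hc ⊢; exact hb c)
  | univ =>
    obtain ⟨c, hc⟩ := hne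
    exact ⟨c, hc, fun y _ => trivial⟩
  | inter U V hU hV ihU ihV =>
    obtain ⟨c1, hc1, hs1⟩ := ihU hz.1
    obtain ⟨c2, hc2, hs2⟩ := ihV hz.2
    rcases auxLinear hT (le_of_lt hc1) (le_of_lt hc2) with h12 | h21
    · refine ⟨c2, hc2, fun y hy => ⟨hs1 ⟨lt_of_le_of_lt h12 hy.1, hy.2⟩, hs2 hy⟩⟩
    · refine ⟨c1, hc1, fun y hy => ⟨hs1 hy, hs2 ⟨lt_of_le_of_lt h21 hy.1, hy.2⟩⟩⟩
  | sUnion 𝒮 hS ih =>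
    obtain ⟨t, ht𝒮, hzt⟩ := hz
    obtain ⟨c, hc, hsub⟩ := ih t ht𝒮 hzt
    exact ⟨c, hc, fun y hy => ⟨t, ht𝒮, hsub hy⟩⟩

theorem auxMemClosure (htop : tT = treeTopology T) (hT : IsTreeOrder T) {z : T} {A : Set T}
    (hne : (Set.Iio z).Nonempty) (hcof : ∀ c, c < z → (A ∩ Set.Ioc c z).Nonempty) :
    z ∈ closure A := by
  rw [mem_closure_iff]
  intro U hU hzU
  obtain ⟨c, hc, hsub⟩ := auxNbhd htop hT hne hU hzU
  obtain ⟨a, haA, haI⟩ := hcof c hc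
  exact ⟨a, hsub haI, haA⟩

theorem auxClosurePt (htop : tT = treeTopology T) (hT : IsTreeOrder T) {z : T} {A : Set T}
    (hz : z ∈ closure A) (hzA : z ∉ A) :
    (Set.Iio z).Nonempty ∧ ∀ c, c < z → ∃ a ∈ A, c < a ∧ a < z := by
  have hne : (Set.Iio z).Nonempty := by
    by_contra hmin
    have hmin' : ∀ a : T, ¬a < z := by
      intro a ha
      exact hmin ⟨a, ha⟩
    obtain ⟨a, ha1, ha2⟩ := (mem_closure_iff.mp hz) {z} (auxSingOpen htop hmin') rfl
    exact hzA (by rwa [ha1] at ha2)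
  refine ⟨hne, fun c hc => ?_⟩
  obtain ⟨a, haI, haA⟩ := (mem_closure_iff.mp hz) (Set.Ioc c z) (auxIocOpen htop hc) ⟨hc, le_refl z⟩
  have : a < z := lt_of_le_of_ne haI.2 (fun h => hzA (h ▸ haA))
  exact ⟨a, haA, haI.1, this⟩

theorem auxAntichain (htop : tT = treeTopology T) (hT : IsTreeOrder T) {S : Set T}
    (hSc : ∀ D : Set T, ClosedDiscreteIn D S → D.Countable) {D : Set T} (hDS : D ⊆ S)
    (hD : ∀ a ∈ D, ∀ b ∈ D, a ≠ b → ¬a ≤ b) : D.Countable := by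
  apply hSc
  refine ⟨hDS, ?_, ?_⟩
  · rintro t ⟨htc, _⟩
    by_contra htD
    obtain ⟨hne, hcof⟩ := auxClosurePt htop hT htc htD
    obtain ⟨c0, hc0⟩ := hne
    obtain ⟨a1, ha1D, _, ha1z⟩ := hcof c0 hc0
    obtain ⟨a2, ha2D, h12, _⟩ := hcof a1 ha1z
    exact hD a1 ha1D a2 ha2D (ne_of_lt h12) (le_of_lt h12)
  · intro x hxD
    rcases Set.eq_empty_or_nonempty (Set.Iio x) with hemp | ⟨c, hc⟩
    · refine ⟨{x}, auxSingOpen htop (fun a ha => ?_), rfl, ?_⟩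
      · exact (Set.eq_empty_iff_forall_notMem.mp hemp) a ha
      · apply Set.eq_singleton_iff_unique_mem.mpr
        exact ⟨⟨rfl, hxD⟩, fun y hy => hy.1⟩
    · refine ⟨Set.Ioc c x, auxIocOpen htop hc, ⟨hc, le_refl x⟩, ?_⟩
      apply Set.eq_singleton_iff_unique_mem.mpr
      refine ⟨⟨⟨hc, le_refl x⟩, hxD⟩, fun y hy => ?_⟩
      by_contra hyx
      exact hD y hy.2 x hxD hyx hy.1.2

theorem auxLtool (htop : tT = treeTopology T) (hT : IsTreeOrder T) {S : Set T}
    (hSc : ∀ D : Set T, ClosedDiscreteIn D S → D.Countable) {Y : Set T} (hYS : Y ⊆ S)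
    (hY : ¬Y.Countable) :
    ∃ z ∈ S, (Set.Iio z).Nonempty ∧ ∀ c, c < z → ∃ y ∈ Y, c < y ∧ y < z := by
  by_contra hno
  push_neg at hno
  apply hY
  apply hSc
  refine ⟨hYS, ?_, ?_⟩
  · rintro t ⟨htc, htS⟩
    by_contra htY
    obtain ⟨hne, hcof⟩ := auxClosurePt htop hT htc htY
    obtain ⟨c, hc, hcbad⟩ := hno t htS hne
    obtain ⟨a, haY, hca, hat⟩ := hcof c hc
    exact hcbad a haY hca hat
  · intro y hyY
    rcases Set.eq_empty_or_nonempty (Set.Iio y) with hemp | hne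
    · refine ⟨{y}, auxSingOpen htop (fun a ha => (Set.eq_empty_iff_forall_notMem.mp hemp) a ha),
        rfl, ?_⟩
      apply Set.eq_singleton_iff_unique_mem.mpr
      exact ⟨⟨rfl, hyY⟩, fun w hw => hw.1⟩
    · obtain ⟨c, hc, hcbad⟩ := hno y (hYS hyY) hne
      refine ⟨Set.Ioc c y, auxIocOpen htop hc, ⟨hc, le_refl y⟩, ?_⟩
      apply Set.eq_singleton_iff_unique_mem.mpr
      refine ⟨⟨⟨hc, le_refl y⟩, hyY⟩, fun w hw => ?_⟩
      by_contra hwy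
      exact hcbad w hw.2 hw.1.1 (lt_of_le_of_ne hw.1.2 hwy)

end AuxTop

section AuxOrdinal

theorem auxOmega1Limit : Order.IsSuccLimit (ω₁ : Ordinal.{u}) := by
  rw [← ord_aleph]
  exact Cardinal.isSuccLimit_ord (aleph0_le_aleph 1)

theorem auxSuccLt {o : Ordinal.{u}} (h : o < ω₁) : o + 1 < ω₁ := by
  rw [Ordinal.add_one_eq_succ]
  exact auxOmega1Limit.succ_lt h

theorem auxZeroLt.{w} : (0 : Ordinal.{w}) < ω₁ :=
  auxOmega1Limit.pos

theorem auxCardLt {o : Ordinal.{u}} (h : o < ω₁) : o.card ≤ ℵ₀ := by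
  have h1 : o.card < ℵ_ 1 := by
    apply Cardinal.lt_ord.mp
    rwa [ord_aleph]
  have h2 : (ℵ_ (1 : Ordinal.{u})) = Order.succ (ℵ₀ : Cardinal.{u}) := by
    have := Cardinal.aleph_succ (0 : Ordinal.{u})
    rw [show Order.succ (0 : Ordinal.{u}) = 1 by simp] at this
    rw [this, Cardinal.aleph_zero]
  rw [h2] at h1
  exact Order.lt_succ_iff.mp h1

/-- Countable sets of countable ordinals are bounded below `ω₁`. -/
theorem auxBound (s : Set Ordinal.{u}) (hc : s.Countable) (h : ∀ o ∈ s, o < ω₁) :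
    ∃ β, β < ω₁ ∧ ∀ o ∈ s, o < β := by
  rcases Set.eq_empty_or_nonempty s with rfl | hne
  · refine ⟨1, ?_, fun o ho => absurd ho (Set.notMem_empty o)⟩
    have := auxSuccLt (auxZeroLt.{u})
    rwa [zero_add] at this
  obtain ⟨f, hf⟩ := Countable.exists_surjective hne hc
  set g : ℕ → Ordinal.{u} := fun n => ((f n : ↥s) : Ordinal) with hg
  have hglt : ∀ n, g n < ω₁ := fun n => h _ (f n).2
  have hsup : iSup g < ω₁ := by
    apply Ordinal.iSup_lt_ord_lift _ hglt
    rw [Cardinal.mk_nat, Cardinal.lift_aleph0, ← ord_aleph,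
      Cardinal.isRegular_aleph_one.cof_eq]
    rw [← Cardinal.aleph_zero]
    exact Cardinal.aleph_lt_aleph.mpr zero_lt_one
  refine ⟨iSup g + 1, auxSuccLt hsup, fun o ho => ?_⟩
  obtain ⟨n, hn⟩ := hf ⟨o, ho⟩
  have : o ≤ iSup g := by
    have h2 := Ordinal.le_iSup g n
    have h3 : g n = o := by rw [hg]; simp only [hn]
    rwa [h3] at h2
  exact lt_of_le_of_lt this (lt_of_lt_of_le (lt_add_one _) (le_refl _))

theorem auxIioCt {o : Ordinal.{u}} (h : o < ω₁) : (Set.Iio o).Countable := by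
  rw [← Set.countable_coe_iff, ← Cardinal.mk_le_aleph0_iff, Ordinal.mk_Iio_ordinal]
  calc Cardinal.lift.{u+1} o.card ≤ Cardinal.lift.{u+1} ℵ₀ :=
        Cardinal.lift_le.mpr (auxCardLt h)
    _ = ℵ₀ := Cardinal.lift_aleph0

theorem auxBoundFam {ι : Ordinal.{u}} (hι : ι < ω₁) (f : ∀ κ, κ < ι → Ordinal.{u})
    (hf : ∀ κ hκ, f κ hκ < ω₁) : ∃ β, β < ω₁ ∧ ∀ κ hκ, f κ hκ < β := by
  have hct : Countable ↥(Set.Iio ι) := (auxIioCt hι).to_subtype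
  set s : Set Ordinal.{u} := Set.range (fun p : ↥(Set.Iio ι) => f p.1 p.2) with hs
  have hsc : s.Countable := Set.countable_range _
  have hslt : ∀ o ∈ s, o < ω₁ := by
    rintro o ⟨p, rfl⟩
    exact hf p.1 p.2
  obtain ⟨β, hβ, hball⟩ := auxBound s hsc hslt
  exact ⟨β, hβ, fun κ hκ => hball _ ⟨⟨κ, hκ⟩, rfl⟩⟩

end AuxOrdinal

section AuxLevels

variable {T : Type u} [PartialOrder T] [tT : TopologicalSpace T]

/-- Each level of a subset of `downClosure A`, `A ⊆ S`, is countable. -/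
theorem auxLevels (htop : tT = treeTopology T) (hT : IsTreeOrder T) {S : Set T}
    (hSc : ∀ D : Set T, ClosedDiscreteIn D S → D.Countable) {X A : Set T} (hAS : A ⊆ S)
    (hX : X ⊆ downClosure A) (α : Ordinal.{u}) :
    {x ∈ X | treeHeight hT x = α}.Countable := by
  set L := {x ∈ X | treeHeight hT x = α} with hL
  have hwit : ∀ x : ↥L, ∃ w, w ∈ A ∧ (x : T) ≤ w := by
    intro x
    obtain ⟨w, hwA, hxw⟩ := hX x.2.1
    exact ⟨w, hwA, hxw⟩
  choose wit hwitA hwitle using hwit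
  -- comparability of witnesses forces equality of the points
  have hkey : ∀ x y : ↥L, wit x ≤ wit y → x = y := by
    intro x y hw
    have hx : (x : T) ≤ wit y := le_trans (hwitle x) hw
    have hcmp := auxLinear hT hx (hwitle y)
    have hxy : (x : T) = (y : T) := by
      rcases hcmp with h | h
      · rcases eq_or_lt_of_le h with h' | h'
        · exact h'
        · exfalso
          have := auxHtLt hT h'
          rw [x.2.2, y.2.2] at this
          exact lt_irrefl _ this
      · rcases eq_or_lt_of_le h with h' | h'
        · exact h'.symm
        · exfalso
          have := auxHtLt hT h'
          rw [x.2.2, y.2.2] at this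
          exact lt_irrefl _ this
    exact Subtype.ext hxy
  have hDct : (Set.range wit).Countable := by
    apply auxAntichain htop hT hSc
    · rintro w ⟨x, rfl⟩
      exact hAS (hwitA x)
    · rintro a ⟨x, rfl⟩ b ⟨y, rfl⟩ hne hle
      exact hne (congrArg wit (hkey x y hle))
  have hinj : Function.Injective wit := by
    intro x y h
    exact hkey x y (le_of_eq h)
  have : Countable ↥(Set.range wit) := hDct.to_subtype
  have : Countable ↥L := by
    have hinj2 : Function.Injective (fun x : ↥L => (⟨wit x, ⟨x, rfl⟩⟩ : ↥(Set.range wit))) := by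
      intro x y h
      exact hinj (congrArg Subtype.val h)
    exact Countable.of_equiv _ (Equiv.ofInjective _ hinj2).symm
  exact Set.countable_coe_iff.mp this

theorem auxUnbounded (htop : tT = treeTopology T) (hT : IsTreeOrder T) {S : Set T}
    (hSc : ∀ D : Set T, ClosedDiscreteIn D S → D.Countable) {X A : Set T} (hAS : A ⊆ S)
    (hX : X ⊆ downClosure A) (hXc : ¬X.Countable) {γ : Ordinal.{u}} (hγ : γ < ω₁) :
    ∃ x ∈ X, γ ≤ treeHeight hT x := by
  by_contra hbad
  push_neg at hbad
  apply hXc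
  have hsub : X ⊆ ⋃ α ∈ Set.Iio γ, {x ∈ X | treeHeight hT x = α} := by
    intro x hx
    exact Set.mem_biUnion (hbad x hx) ⟨hx, rfl⟩
  exact Set.Countable.mono hsub
    (Set.Countable.biUnion (auxIioCt hγ) (fun α _ => auxLevels htop hT hSc hAS hX α))

/-- The key bound: there are only countably many "traces" `{n ≤ e | n ∈ A↓}` over
`e ∈ B \ A↓`, hence a uniform height bound on all such traces. -/
theorem auxMainBound (htop : tT = treeTopology T) (hT : IsTreeOrder T) {S : Set T}
    (hSc : ∀ D : Set T, ClosedDiscreteIn D S → D.Countable)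
    (hlt : ∀ x : T, treeHeight hT x < ω₁) {A B : Set T} (hBS : B ⊆ S) :
    ∃ γ, γ < ω₁ ∧ ∀ e ∈ B, e ∉ downClosure A →
      ∀ n, n ≤ e → n ∈ downClosure A → treeHeight hT n < γ := by
  classical
  set tr : T → Set T := fun e => {n | n ≤ e ∧ n ∈ downClosure A} with htr
  set Dom := {e | e ∈ B ∧ e ∉ downClosure A} with hDom
  set V : Set (Set T) := tr '' Dom with hV
  -- trace equality along comparable points
  have keyEq : ∀ e e', e ∉ downClosure A → e ≤ e' → tr e = tr e' := by
    intro e e' he hee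
    apply Set.eq_of_subset_of_subset
    · rintro n ⟨hn1, hn2⟩
      exact ⟨le_trans hn1 hee, hn2⟩
    · rintro n ⟨hn1, hn2⟩
      rcases auxLinear hT hn1 hee with h | h
      · exact ⟨h, hn2⟩
      · exfalso
        obtain ⟨w, hwA, hnw⟩ := hn2
        exact he ⟨w, hwA, le_trans h hnw⟩
  -- choose representatives
  have hrep : ∀ v : ↥V, ∃ e, e ∈ Dom ∧ tr e = (v : Set T) := by
    rintro ⟨v, e, heDom, rfl⟩
    exact ⟨e, heDom, rfl⟩
  choose rep hrepDom hreptr using hrep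
  -- V is countable
  have hVct : V.Countable := by
    have hDct : (Set.range rep).Countable := by
      apply auxAntichain htop hT hSc
      · rintro w ⟨v, rfl⟩
        exact hBS (hrepDom v).1
      · rintro a ⟨v, rfl⟩ b ⟨v', rfl⟩ hne hle
        apply hne
        apply congrArg rep
        apply Subtype.ext
        rw [← hreptr v, ← hreptr v']
        exact keyEq _ _ (hrepDom v).2 hle
    have hrinj : Function.Injective rep := by
      intro v v' h
      apply Subtype.ext
      rw [← hreptr v, ← hreptr v', h]
    have : Countable ↥(Set.range rep) := hDct.to_subtype
    have : Countable ↥V :=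
      Countable.of_equiv _ (Equiv.ofInjective
        (fun v : ↥V => (⟨rep v, ⟨v, rfl⟩⟩ : ↥(Set.range rep)))
        (fun v v' h => hrinj (congrArg Subtype.val h))).symm
    exact Set.countable_coe_iff.mp this
  -- bound the heights of all traces
  have hVsub : Countable ↥V := hVct.to_subtype
  obtain ⟨γ, hγ, hγall⟩ := auxBound
    (Set.range (fun v : ↥V => treeHeight hT (rep v) + 1))
    (Set.countable_range _)
    (by rintro o ⟨v, rfl⟩; exact auxSuccLt (hlt _))
  refine ⟨γ, hγ, ?_⟩
  intro e heB heA n hne hnA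
  set v : ↥V := ⟨tr e, ⟨e, ⟨heB, heA⟩, rfl⟩⟩ with hv
  have hnrep : n ≤ rep v := by
    have h1 : n ∈ tr e := ⟨hne, hnA⟩
    have h2 : tr (rep v) = tr e := hreptr v
    rw [← h2] at h1
    exact h1.1
  calc treeHeight hT n ≤ treeHeight hT (rep v) := auxHtLe hT hnrep
    _ < treeHeight hT (rep v) + 1 := lt_add_one _
    _ < γ := hγall _ ⟨v, rfl⟩

end AuxLevels

section AuxRec

/-- Generic transfinite choice of an `ω₁`-sequence whose `h₁`-heights dominate all
earlier `h₂`-heights. -/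
theorem auxRecursion {T : Type u} (P : T → Prop) (h₁ h₂ : T → Ordinal.{u})
    (hlt₂ : ∀ x : T, h₂ x < ω₁)
    (hm : ∀ γ, γ < ω₁ → ∃ w, P w ∧ γ ≤ h₁ w) :
    ∃ g : Ordinal.{u} → T, ∀ ι, ι < ω₁ → P (g ι) ∧ ∀ κ, κ < ι → h₂ (g κ) < h₁ (g ι) := by
  classical
  have hsel : ∀ γ : Ordinal.{u}, ∃ w, γ < ω₁ → (P w ∧ γ ≤ h₁ w) := by
    intro γ
    by_cases h : γ < ω₁
    · obtain ⟨w, hw⟩ := hm γ h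
      exact ⟨w, fun _ => hw⟩
    · obtain ⟨w, hw⟩ := hm 0 auxZeroLt
      exact ⟨w, fun hc => absurd hc h⟩
  choose sel hselspec using hsel
  set B : Ordinal.{u} → Ordinal.{u} := WellFounded.fix Ordinal.lt_wf
    (fun ι IH => if hι : ι < ω₁ then
      (auxBoundFam hι (fun κ hκ => h₂ (sel (IH κ hκ)) + 1)
        (fun _ _ => auxSuccLt (hlt₂ _))).choose
      else 0) with hB
  have hBspec : ∀ ι, ι < ω₁ → B ι < ω₁ ∧ ∀ κ, κ < ι → h₂ (sel (B κ)) + 1 < B ι := by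
    intro ι hι
    have heq := WellFounded.fix_eq Ordinal.lt_wf
      (fun (ι : Ordinal.{u}) (IH : ∀ κ, κ < ι → Ordinal.{u}) => if hι : ι < ω₁ then
        (auxBoundFam hι (fun κ hκ => h₂ (sel (IH κ hκ)) + 1)
          (fun _ _ => auxSuccLt (hlt₂ _))).choose
        else 0) ι
    rw [← hB] at heq
    rw [dif_pos hι] at heq
    beta_reduce at heq
    rw [heq]
    exact ⟨(auxBoundFam hι (fun κ hκ => h₂ (sel (B κ)) + 1)
        (fun _ _ => auxSuccLt (hlt₂ _))).choose_spec.1,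
      fun κ hκ => (auxBoundFam hι (fun κ hκ => h₂ (sel (B κ)) + 1)
        (fun _ _ => auxSuccLt (hlt₂ _))).choose_spec.2 κ hκ⟩
  refine ⟨fun ι => sel (B ι), fun ι hι => ?_⟩
  obtain ⟨hB1, hB2⟩ := hBspec ι hι
  obtain ⟨hP, hle⟩ := hselspec (B ι) hB1
  refine ⟨hP, fun κ hκ => ?_⟩
  calc h₂ (sel (B κ)) < h₂ (sel (B κ)) + 1 := lt_add_one _
    _ < B ι := hB2 κ hκ
    _ ≤ h₁ (sel (B ι)) := hle

end AuxRec


/-- If E, F are closed subsets of an uncountable ω₁-compact subspace S of a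
(Hausdorff) tree of height ω₁ and E ∩ F is countable, then E↓ ∩ F↓ is countable. -/
theorem countable_inter_downClosures {T : Type u} [PartialOrder T]
    [tT : TopologicalSpace T] (htop : tT = treeTopology T)
    (hT : IsTreeOrder T) (hH : IsHausdorffTree T) (hht : HasHeightOmega1 hT)
    (S : Set T) (hSu : ¬S.Countable) (hSc : OmegaOneCompactIn S)
    (E F : Set T) (hE : E ⊆ S) (hF : F ⊆ S)
    (hEcl : closure E ∩ S ⊆ E) (hFcl : closure F ∩ S ⊆ F)
    (hEF : (E ∩ F).Countable) :
    (downClosure E ∩ downClosure F).Countable := by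

  classical
  have hSc : ∀ D : Set T, ClosedDiscreteIn D S → D.Countable := hSc
  by_contra hW
  have hlt : ∀ x : T, treeHeight hT x < ω₁ := hht.1
  -- the bound δ on heights of points below E ∩ F
  obtain ⟨δ, hδ1, hδ2⟩ := auxBound
    (Set.range (fun w : ↥(E ∩ F) => treeHeight hT (w : T) + 1))
    (by
      have : Countable ↥(E ∩ F) := hEF.to_subtype
      exact Set.countable_range _)
    (by rintro o ⟨w, rfl⟩; exact auxSuccLt (hlt _))
  have hδprop : ∀ x w : T, w ∈ E → w ∈ F → x ≤ w → treeHeight hT x < δ := by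
    intro x w hwE hwF hxw
    calc treeHeight hT x ≤ treeHeight hT w := auxHtLe hT hxw
      _ < treeHeight hT w + 1 := lt_add_one _
      _ < δ := hδ2 _ ⟨⟨w, hwE, hwF⟩, rfl⟩
  -- the trace bound γ₀ (A := F, B := E)
  obtain ⟨γ₀, hγ₀1, hγ₀2⟩ := auxMainBound htop hT hSc hlt (A := F) (B := E) hE
  -- unboundedly many points of E which lie strictly below a point of F
  have φ : ∀ γ, γ < ω₁ →
      ∃ w, (w ∈ E ∧ (∃ f, f ∈ F ∧ w < f) ∧ δ ≤ treeHeight hT w) ∧ γ ≤ treeHeight hT w := by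
    intro γ hγ
    set γ' := max γ (max δ γ₀) with hγ'def
    have hγ' : γ' < ω₁ := max_lt hγ (max_lt hδ1 hγ₀1)
    obtain ⟨x, hxW, hγ'x⟩ := auxUnbounded htop hT hSc hE
      (Set.inter_subset_left : downClosure E ∩ downClosure F ⊆ downClosure E) hW hγ'
    obtain ⟨e, heE, hxe⟩ := hxW.1
    have hδx : δ ≤ treeHeight hT x := le_trans (le_trans (le_max_left δ γ₀) (le_max_right γ _)) hγ'x
    have hγ₀x : γ₀ ≤ treeHeight hT x :=
      le_trans (le_trans (le_max_right δ γ₀) (le_max_right γ _)) hγ'x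
    have heF : e ∈ downClosure F := by
      by_contra h
      exact absurd (hγ₀2 e heE h x hxe hxW.2) (not_lt.mpr hγ₀x)
    obtain ⟨f, hfF, hef⟩ := heF
    have hne : e ≠ f := by
      rintro rfl
      exact absurd (hδprop x e heE hfF hxe) (not_lt.mpr hδx)
    have hxhe : treeHeight hT x ≤ treeHeight hT e := auxHtLe hT hxe
    exact ⟨e, ⟨heE, ⟨f, hfF, lt_of_le_of_ne hef hne⟩, le_trans hδx hxhe⟩,
      le_trans (le_trans (le_max_left γ _) hγ'x) hxhe⟩
  -- a choice of an element of F strictly above, where possible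
  set fSel : T → T := fun w => if h : ∃ f, f ∈ F ∧ w < f then h.choose else w with hfSel
  have fSelSpec : ∀ w : T, (∃ f, f ∈ F ∧ w < f) → fSel w ∈ F ∧ w < fSel w := by
    intro w h
    simp only [hfSel]
    rw [dif_pos h]
    exact ⟨h.choose_spec.1, h.choose_spec.2⟩
  -- the recursion
  obtain ⟨g, hg⟩ := auxRecursion
    (fun w => w ∈ E ∧ (∃ f, f ∈ F ∧ w < f) ∧ δ ≤ treeHeight hT w)
    (treeHeight hT) (fun w => treeHeight hT (fSel w)) (fun _ => hlt _) φ
  set ψ : Ordinal.{u} → T := fun ι => fSel (g ι) with hψ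
  have hgprop : ∀ ι, ι < ω₁ →
      g ι ∈ E ∧ δ ≤ treeHeight hT (g ι) ∧ ψ ι ∈ F ∧ g ι < ψ ι := by
    intro ι hι
    obtain ⟨⟨h1, h2, h3⟩, _⟩ := hg ι hι
    obtain ⟨h4, h5⟩ := fSelSpec (g ι) h2
    exact ⟨h1, h3, h4, h5⟩
  have hdom : ∀ ι κ, ι < κ → κ < ω₁ → treeHeight hT (ψ ι) < treeHeight hT (g κ) := by
    intro ι κ hικ hκ
    exact (hg κ hκ).2 ι hικ
  have hmono : ∀ ι κ, ι < κ → κ < ω₁ → treeHeight hT (ψ ι) < treeHeight hT (ψ κ) := by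
    intro ι κ hικ hκ
    exact lt_trans (hdom ι κ hικ hκ) (auxHtLt hT (hgprop κ hκ).2.2.2)
  have hge : ∀ ι, ι < ω₁ → ι ≤ treeHeight hT (ψ ι) := by
    intro ι
    induction ι using Ordinal.induction with
    | _ ι IH =>
      intro hι
      by_contra hx
      push_neg at hx
      have hκω : treeHeight hT (ψ ι) < ω₁ := lt_trans hx hι
      have h1 := IH _ hx hκω
      have h2 := hmono _ _ hx hι
      exact absurd h1 (not_le.mpr h2)
  set Y : Set T := {t | ∃ ι, ι < ω₁ ∧ ψ ι = t} with hY
  have hYS : Y ⊆ S := by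
    rintro t ⟨ι, hι, rfl⟩
    exact hF (hgprop ι hι).2.2.1
  have hYu : ¬Y.Countable := by
    intro hYc
    obtain ⟨β, hβ, hball⟩ := auxBound ((fun t => treeHeight hT t) '' Y) (hYc.image _)
      (by rintro o ⟨t, _, rfl⟩; exact hlt t)
    have h1 : treeHeight hT (ψ β) < β := hball _ ⟨ψ β, ⟨β, hβ, rfl⟩, rfl⟩
    exact absurd (hge β hβ) (not_le.mpr h1)
  obtain ⟨z, hzS, ⟨c0, hc0⟩, hcof⟩ := auxLtool htop hT hSc hYS hYu
  -- both E and F points are cofinal below z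
  have hkey : ∀ c, c < z → ∃ κ, κ < ω₁ ∧ g κ ∈ E ∧ δ ≤ treeHeight hT (g κ) ∧
      c < g κ ∧ g κ < z := by
    intro c hc
    obtain ⟨y1, hy1Y, hcy1, hy1z⟩ := hcof c hc
    obtain ⟨ι, hι, rfl⟩ := hy1Y
    obtain ⟨y2, hy2Y, h12, hy2z⟩ := hcof (ψ ι) hy1z
    obtain ⟨κ, hκ, rfl⟩ := hy2Y
    have hικ : ι < κ := by
      rcases lt_trichotomy ι κ with h | h | h
      · exact h
      · exact absurd (h ▸ h12) (lt_irrefl _)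
      · exact absurd (auxHtLt hT h12) (not_lt.mpr (le_of_lt (hmono κ ι h hι)))
    obtain ⟨hgE, hgδ, _, hgψ⟩ := hgprop κ hκ
    have hgz : g κ < z := lt_trans hgψ hy2z
    have hchtg : treeHeight hT c < treeHeight hT (g κ) :=
      lt_trans (auxHtLt hT hcy1) (hdom ι κ hικ hκ)
    have hcg : c < g κ := by
      rcases auxLinear hT (le_of_lt hc) (le_of_lt hgz) with h | h
      · exact lt_of_le_of_ne h (fun he => absurd (he ▸ hchtg) (lt_irrefl _))
      · exact absurd (auxHtLe hT h) (not_le.mpr hchtg)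
    exact ⟨κ, hκ, hgE, hgδ, hcg, hgz⟩
  have hzE : z ∈ E := by
    apply hEcl
    refine ⟨auxMemClosure htop hT ⟨c0, hc0⟩ (fun c hc => ?_), hzS⟩
    obtain ⟨κ, _, hgE, _, hcg, hgz⟩ := hkey c hc
    exact ⟨g κ, hgE, hcg, le_of_lt hgz⟩
  have hzF : z ∈ F := by
    apply hFcl
    refine ⟨auxMemClosure htop hT ⟨c0, hc0⟩ (fun c hc => ?_), hzS⟩
    obtain ⟨y, hyY, hcy, hyz⟩ := hcof c hc
    obtain ⟨ι, hι, rfl⟩ := hyY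
    exact ⟨ψ ι, (hgprop ι hι).2.2.1, hcy, le_of_lt hyz⟩
  obtain ⟨κ, _, _, hgδ, _, hgz⟩ := hkey c0 hc0
  exact absurd (hδprop (g κ) z hzE hzF (le_of_lt hgz)) (not_lt.mpr hgδ)
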